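/- arXiv:2209.01990 — 6 statements merged into one kernel-verified Lean document; each statement's English description precedes it below -/
import Mathlib

section
/- Let C be a normal topological space and let r ≥ 1. For each i = 1, …, r let A_i be a property (predicate) of open subsets of C such that: (i) if an open set U satisfies A_i, then every open subset of U satisfies A_i; and (ii) if a family of pairwise disjoint open sets each satisfies A_i, then their union satisfies A_i. Assume that for each i the space C admits a cover by n_i + 1 open sets each satisfying A_i. Then C admits a cover by N + 1 open sets, where N = n_1 + n_2 + ⋯ + n_r, each of which satisfies all of the properties A_1, …, A_r simultaneously. -/
open Finset in
theorem cc_key {C : Type*} [TopologicalSpace C] {n m : ℕ}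
    (φ ψ : ℕ → C → ℝ)
    (hφc : ∀ a, Continuous (φ a)) (hψc : ∀ b, Continuous (ψ b))
    (hφ0 : ∀ a x, 0 ≤ φ a x) (hψ0 : ∀ b x, 0 ≤ ψ b x)
    (hφz : ∀ a, n < a → ∀ x, φ a x = 0) (hψz : ∀ b, m < b → ∀ x, ψ b x = 0)
    (hφpos : ∀ x, ∃ a, 0 < φ a x) (hψpos : ∀ x, ∃ b, 0 < ψ b x) :
    ∃ O : Finset (ℕ × ℕ) → Set C,
      (∀ c, IsOpen (O c)) ∧
      (∀ c, ∀ q ∈ c, ∀ x ∈ O c, 0 < φ q.1 x ∧ 0 < ψ q.2 x) ∧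
      (∀ c c', c.card = c'.card → c ≠ c' → Disjoint (O c) (O c')) ∧
      (∀ x, ∃ c, c.Nonempty ∧ c.card ≤ n + m + 1 ∧ x ∈ O c) := by
  classical
  set Φ : ℕ → C → ℝ := fun a x => ∑ j ∈ Finset.range a, φ j x with hΦdef
  set Ψ : ℕ → C → ℝ := fun b x => ∑ j ∈ Finset.range b, ψ j x with hΨdef
  set lam : ℕ × ℕ → C → ℝ := fun q x =>
    min (Φ (q.1+1) x) (Ψ (q.2+1) x) - max (Φ q.1 x) (Ψ q.2 x) with hlamdef
  have hΦmono : ∀ (x) {a a'}, a ≤ a' → Φ a x ≤ Φ a' x := fun x {a a'} h =>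
    Finset.sum_le_sum_of_subset_of_nonneg (Finset.range_subset_range.2 h) (fun j _ _ => hφ0 j x)
  have hΨmono : ∀ (x) {b b'}, b ≤ b' → Ψ b x ≤ Ψ b' x := fun x {b b'} h =>
    Finset.sum_le_sum_of_subset_of_nonneg (Finset.range_subset_range.2 h) (fun j _ _ => hψ0 j x)
  have hΦc : ∀ a, Continuous (Φ a) := fun a => continuous_finset_sum _ fun j _ => hφc j
  have hΨc : ∀ b, Continuous (Ψ b) := fun b => continuous_finset_sum _ fun j _ => hψc j
  have hlamc : ∀ q, Continuous (lam q) := fun q =>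
    ((hΦc _).min (hΨc _)).sub ((hΦc _).max (hΨc _))
  have hΦsucc : ∀ a x, Φ (a+1) x = Φ a x + φ a x := fun a x => Finset.sum_range_succ _ _
  have hΨsucc : ∀ b x, Ψ (b+1) x = Ψ b x + ψ b x := fun b x => Finset.sum_range_succ _ _
  have hlamφ : ∀ q x, lam q x ≤ φ q.1 x := by
    intro q x
    have h1 : min (Φ (q.1+1) x) (Ψ (q.2+1) x) ≤ Φ (q.1+1) x := min_le_left _ _
    have h2 : Φ q.1 x ≤ max (Φ q.1 x) (Ψ q.2 x) := le_max_left _ _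
    have h3 := hΦsucc q.1 x
    simp only [hlamdef]; linarith
  have hlamψ : ∀ q x, lam q x ≤ ψ q.2 x := by
    intro q x
    have h1 : min (Φ (q.1+1) x) (Ψ (q.2+1) x) ≤ Ψ (q.2+1) x := min_le_right _ _
    have h2 : Ψ q.2 x ≤ max (Φ q.1 x) (Ψ q.2 x) := le_max_right _ _
    have h3 := hΨsucc q.2 x
    simp only [hlamdef]; linarith
  -- positivity consequences
  have hpos : ∀ q x, 0 < lam q x → 0 < φ q.1 x ∧ 0 < ψ q.2 x := fun q x h =>
    ⟨lt_of_lt_of_le h (hlamφ q x), lt_of_lt_of_le h (hlamψ q x)⟩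
  have hidx : ∀ q x, 0 < lam q x → q.1 ≤ n ∧ q.2 ≤ m := by
    intro q x h
    constructor
    · by_contra hq; exact absurd (hφz q.1 (by omega) x) (ne_of_gt (hpos q x h).1)
    · by_contra hq; exact absurd (hψz q.2 (by omega) x) (ne_of_gt (hpos q x h).2)
  -- two consequences of positivity used for the chain property
  have hA : ∀ q x, 0 < lam q x → Ψ q.2 x < Φ (q.1+1) x := by
    intro q x h
    have h1 : min (Φ (q.1+1) x) (Ψ (q.2+1) x) ≤ Φ (q.1+1) x := min_le_left _ _
    have h2 : Ψ q.2 x ≤ max (Φ q.1 x) (Ψ q.2 x) := le_max_right _ _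
    simp only [hlamdef] at h; linarith
  have hB : ∀ q x, 0 < lam q x → Φ q.1 x < Ψ (q.2+1) x := by
    intro q x h
    have h1 : min (Φ (q.1+1) x) (Ψ (q.2+1) x) ≤ Ψ (q.2+1) x := min_le_right _ _
    have h2 : Φ q.1 x ≤ max (Φ q.1 x) (Ψ q.2 x) := le_max_left _ _
    simp only [hlamdef] at h; linarith
  set G : Finset (ℕ × ℕ) := (Finset.range (n+1)) ×ˢ (Finset.range (m+1)) with hGdef
  have hmemG : ∀ q x, 0 < lam q x → q ∈ G := by
    intro q x h
    obtain ⟨h1, h2⟩ := hidx q x h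
    simp [hGdef, Finset.mem_product, Nat.lt_succ_iff, h1, h2]
  set O : Finset (ℕ × ℕ) → Set C := fun c =>
    ⋂ q ∈ c, ({x | 0 < lam q x} ∩ ⋂ q' ∈ G \ c, {x | lam q' x < lam q x}) with hOdef
  have hOmem : ∀ c x, x ∈ O c ↔ ∀ q ∈ c, 0 < lam q x ∧ ∀ q' ∈ G \ c, lam q' x < lam q x := by
    intro c x
    simp [hOdef, Set.mem_iInter]
  refine ⟨O, ?_, ?_, ?_, ?_⟩
  · intro c
    refine isOpen_biInter_finset fun q _ => (isOpen_lt continuous_const (hlamc q)).inter ?_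
    exact isOpen_biInter_finset fun q' _ => isOpen_lt (hlamc q') (hlamc q)
  · intro c q hq x hx
    exact hpos q x (((hOmem c x).1 hx q hq).1)
  · intro c c' hcard hne
    have h1 : (c \ c').Nonempty := by
      rw [Finset.sdiff_nonempty]
      intro hsub
      exact hne (Finset.eq_of_subset_of_card_le hsub (le_of_eq hcard.symm))
    have h2 : (c' \ c).Nonempty := by
      rw [Finset.sdiff_nonempty]
      intro hsub
      exact hne (Finset.eq_of_subset_of_card_le hsub (le_of_eq hcard)).symm
    obtain ⟨q, hq⟩ := h1
    obtain ⟨q', hq'⟩ := h2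
    rw [Finset.mem_sdiff] at hq hq'
    rw [Set.disjoint_left]
    intro x hx hx'
    have H := (hOmem c x).1 hx q hq.1
    have H' := (hOmem c' x).1 hx' q' hq'.1
    have hq'G : q' ∈ G \ c := Finset.mem_sdiff.2 ⟨hmemG q' x H'.1, hq'.2⟩
    have hqG : q ∈ G \ c' := Finset.mem_sdiff.2 ⟨hmemG q x H.1, hq.2⟩
    have := H.2 q' hq'G
    have := H'.2 q hqG
    linarith
  · intro x
    set P : Finset (ℕ × ℕ) := G.filter (fun q => 0 < lam q x) with hPdef
    -- nonemptiness
    have hPne : P.Nonempty := by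
      have ha := Nat.find_spec (hφpos x)
      have hb := Nat.find_spec (hψpos x)
      set a0 := Nat.find (hφpos x)
      set b0 := Nat.find (hψpos x)
      have hΦa0 : Φ a0 x = 0 := by
        apply Finset.sum_eq_zero
        intro j hj
        rw [Finset.mem_range] at hj
        exact le_antisymm (not_lt.1 (Nat.find_min (hφpos x) hj)) (hφ0 j x)
      have hΨb0 : Ψ b0 x = 0 := by
        apply Finset.sum_eq_zero
        intro j hj
        rw [Finset.mem_range] at hj
        exact le_antisymm (not_lt.1 (Nat.find_min (hψpos x) hj)) (hψ0 j x)
      have hΦa1 : Φ (a0+1) x = φ a0 x := by rw [hΦsucc, hΦa0, zero_add]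
      have hΨb1 : Ψ (b0+1) x = ψ b0 x := by rw [hΨsucc, hΨb0, zero_add]
      have hlampos : 0 < lam (a0, b0) x := by
        simp only [hlamdef]
        have hmin : 0 < min (Φ (a0+1) x) (Ψ (b0+1) x) := lt_min (by rw [hΦa1]; exact ha)
          (by rw [hΨb1]; exact hb)
        have hmax : max (Φ a0 x) (Ψ b0 x) = 0 := by rw [hΦa0, hΨb0, max_self]
        show 0 < min (Φ (a0+1) x) (Ψ (b0+1) x) - max (Φ a0 x) (Ψ b0 x)
        rw [hmax]; linarith
      exact ⟨(a0, b0), Finset.mem_filter.2 ⟨hmemG _ x hlampos, hlampos⟩⟩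
    have hPpos : ∀ q ∈ P, 0 < lam q x := fun q hq => (Finset.mem_filter.1 hq).2
    -- cardinality bound via injectivity of the sum on P
    have hinj : Set.InjOn (fun q : ℕ × ℕ => q.1 + q.2) P := by
      intro q hq q' hq' hsum
      simp only at hsum
      have hLq := hPpos q hq
      have hLq' := hPpos q' hq'
      rcases Nat.lt_trichotomy q.1 q'.1 with h | h | h
      · exfalso
        have hb : q'.2 + 1 ≤ q.2 := by omega
        have c1 := hA q x hLq
        have c2 := hB q' x hLq'
        have c3 := hΨmono x hb
        have c4 := hΦmono x (show q.1 + 1 ≤ q'.1 by omega)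
        linarith
      · exact Prod.ext h (by omega)
      · exfalso
        have hb : q.2 + 1 ≤ q'.2 := by omega
        have c1 := hA q' x hLq'
        have c2 := hB q x hLq
        have c3 := hΨmono x hb
        have c4 := hΦmono x (show q'.1 + 1 ≤ q.1 by omega)
        linarith
    have hcard : P.card ≤ n + m + 1 := by
      have himg : (P.image (fun q : ℕ × ℕ => q.1 + q.2)).card = P.card :=
        Finset.card_image_of_injOn hinj
      have hsub : P.image (fun q : ℕ × ℕ => q.1 + q.2) ⊆ Finset.range (n + m + 1) := by
        intro k hk
        rw [Finset.mem_image] at hk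
        obtain ⟨q, hq, rfl⟩ := hk
        obtain ⟨h1, h2⟩ := hidx q x (hPpos q hq)
        rw [Finset.mem_range]; omega
      calc P.card = _ := himg.symm
        _ ≤ (Finset.range (n + m + 1)).card := Finset.card_le_card hsub
        _ = n + m + 1 := Finset.card_range _
    refine ⟨P, hPne, hcard, ?_⟩
    rw [hOmem]
    intro q hq
    refine ⟨hPpos q hq, ?_⟩
    intro q' hq'
    rw [Finset.mem_sdiff] at hq'
    have : ¬ 0 < lam q' x := by
      intro hcon
      exact hq'.2 (Finset.mem_filter.2 ⟨hq'.1, hcon⟩)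
    have := not_lt.1 this
    linarith [hPpos q hq]

theorem combine_two {C : Type*} [TopologicalSpace C] [NormalSpace C]
    {n m : ℕ} (A B : Set C → Prop)
    (hsubA : ∀ U V : Set C, IsOpen U → IsOpen V → V ⊆ U → A U → A V)
    (hdisjA : ∀ 𝒱 : Set (Set C), (∀ V ∈ 𝒱, IsOpen V) → 𝒱.PairwiseDisjoint id →
      (∀ V ∈ 𝒱, A V) → A (⋃₀ 𝒱))
    (hsubB : ∀ U V : Set C, IsOpen U → IsOpen V → V ⊆ U → B U → B V)
    (hdisjB : ∀ 𝒱 : Set (Set C), (∀ V ∈ 𝒱, IsOpen V) → 𝒱.PairwiseDisjoint id →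
      (∀ V ∈ 𝒱, B V) → B (⋃₀ 𝒱))
    (U : Fin (n+1) → Set C) (hUo : ∀ j, IsOpen (U j)) (hUc : (⋃ j, U j) = Set.univ)
    (hUA : ∀ j, A (U j))
    (V : Fin (m+1) → Set C) (hVo : ∀ j, IsOpen (V j)) (hVc : (⋃ j, V j) = Set.univ)
    (hVB : ∀ j, B (V j)) :
    ∃ W : Fin (n+m+1) → Set C, (∀ j, IsOpen (W j)) ∧ (⋃ j, W j) = Set.univ ∧
      ∀ j, A (W j) ∧ B (W j) := by
  classical
  obtain ⟨f, hf⟩ := BumpCovering.exists_isSubordinate_of_locallyFinite isClosed_univ U hUo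
    (locallyFinite_of_finite U) (by rw [hUc])
  obtain ⟨g, hg⟩ := BumpCovering.exists_isSubordinate_of_locallyFinite isClosed_univ V hVo
    (locallyFinite_of_finite V) (by rw [hVc])
  set φ : ℕ → C → ℝ := fun a x => if h : a < n+1 then f ⟨a, h⟩ x else 0 with hφdef
  set ψ : ℕ → C → ℝ := fun b x => if h : b < m+1 then g ⟨b, h⟩ x else 0 with hψdef
  have hφc : ∀ a, Continuous (φ a) := by
    intro a
    by_cases h : a < n+1
    · simp only [hφdef, dif_pos h]; exact (f ⟨a, h⟩).continuous
    · simp only [hφdef, dif_neg h]; exact continuous_const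
  have hψc : ∀ b, Continuous (ψ b) := by
    intro b
    by_cases h : b < m+1
    · simp only [hψdef, dif_pos h]; exact (g ⟨b, h⟩).continuous
    · simp only [hψdef, dif_neg h]; exact continuous_const
  have hφ0 : ∀ a x, 0 ≤ φ a x := by
    intro a x
    by_cases h : a < n+1
    · simp only [hφdef, dif_pos h]; exact f.nonneg _ _
    · simp only [hφdef, dif_neg h]; exact le_refl _
  have hψ0 : ∀ b x, 0 ≤ ψ b x := by
    intro b x
    by_cases h : b < m+1
    · simp only [hψdef, dif_pos h]; exact g.nonneg _ _
    · simp only [hψdef, dif_neg h]; exact le_refl _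
  have hφz : ∀ a, n < a → ∀ x, φ a x = 0 := by
    intro a ha x; simp only [hφdef, dif_neg (by omega : ¬ a < n+1)]
  have hψz : ∀ b, m < b → ∀ x, ψ b x = 0 := by
    intro b hb x; simp only [hψdef, dif_neg (by omega : ¬ b < m+1)]
  have hφpos : ∀ x, ∃ a, 0 < φ a x := by
    intro x
    refine ⟨(f.ind x (Set.mem_univ x) : Fin (n+1)), ?_⟩
    have h1 := f.ind_apply x (Set.mem_univ x)
    simp only [hφdef, dif_pos (f.ind x (Set.mem_univ x)).isLt]
    rw [Fin.eta]
    rw [h1]; norm_num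
  have hψpos : ∀ x, ∃ b, 0 < ψ b x := by
    intro x
    refine ⟨(g.ind x (Set.mem_univ x) : Fin (m+1)), ?_⟩
    have h1 := g.ind_apply x (Set.mem_univ x)
    simp only [hψdef, dif_pos (g.ind x (Set.mem_univ x)).isLt]
    rw [Fin.eta]
    rw [h1]; norm_num
  have hφU : ∀ (a : ℕ) (h : a < n+1) (x : C), 0 < φ a x → x ∈ U ⟨a, h⟩ := by
    intro a h x hx
    apply hf ⟨a, h⟩
    apply subset_closure
    simp only [hφdef, dif_pos h] at hx
    exact Function.mem_support.2 (ne_of_gt hx)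
  have hψV : ∀ (b : ℕ) (h : b < m+1) (x : C), 0 < ψ b x → x ∈ V ⟨b, h⟩ := by
    intro b h x hx
    apply hg ⟨b, h⟩
    apply subset_closure
    simp only [hψdef, dif_pos h] at hx
    exact Function.mem_support.2 (ne_of_gt hx)
  obtain ⟨O, hOopen, hOpos, hOdisj, hOcov⟩ :=
    cc_key φ ψ hφc hψc hφ0 hψ0 hφz hψz hφpos hψpos
  -- each nonempty O c with q ∈ c is contained in suitable U, V
  have hOA : ∀ c : Finset (ℕ × ℕ), c.Nonempty → A (O c) ∧ B (O c) := by
    intro c hc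
    by_cases hne : (O c).Nonempty
    · obtain ⟨x0, hx0⟩ := hne
      obtain ⟨q, hq⟩ := hc
      obtain ⟨hφq, hψq⟩ := hOpos c q hq x0 hx0
      have ha : q.1 < n + 1 := by
        by_contra h
        exact absurd (hφz q.1 (by omega) x0) (ne_of_gt hφq)
      have hb : q.2 < m + 1 := by
        by_contra h
        exact absurd (hψz q.2 (by omega) x0) (ne_of_gt hψq)
      constructor
      · refine hsubA (U ⟨q.1, ha⟩) (O c) (hUo _) (hOopen c) ?_ (hUA _)
        intro x hx
        exact hφU q.1 ha x (hOpos c q hq x hx).1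
      · refine hsubB (V ⟨q.2, hb⟩) (O c) (hVo _) (hOopen c) ?_ (hVB _)
        intro x hx
        exact hψV q.2 hb x (hOpos c q hq x hx).2
    · rw [Set.not_nonempty_iff_eq_empty] at hne
      rw [hne]
      exact ⟨hsubA (U 0) ∅ (hUo 0) isOpen_empty (Set.empty_subset _) (hUA 0),
        hsubB (V 0) ∅ (hVo 0) isOpen_empty (Set.empty_subset _) (hVB 0)⟩
  refine ⟨fun k => ⋃₀ (O '' {c | c.card = (k : ℕ) + 1}), ?_, ?_, ?_⟩
  · intro k
    exact isOpen_sUnion (by rintro _ ⟨c, -, rfl⟩; exact hOopen c)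
  · rw [Set.iUnion_eq_univ_iff]
    intro x
    obtain ⟨c, hcne, hccard, hxc⟩ := hOcov x
    have h1 : 1 ≤ c.card := Finset.card_pos.2 hcne
    refine ⟨⟨c.card - 1, by omega⟩, ?_⟩
    exact Set.mem_sUnion.2 ⟨O c, ⟨c, by simp; omega, rfl⟩, hxc⟩
  · intro k
    have hdisjfam : ({S | ∃ c : Finset (ℕ × ℕ), c.card = (k : ℕ) + 1 ∧ O c = S} :
        Set (Set C)).PairwiseDisjoint id := by
      rintro S ⟨c, hc, rfl⟩ T ⟨c', hc', rfl⟩ hST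
      have hcc' : c ≠ c' := by rintro rfl; exact hST rfl
      exact hOdisj c c' (hc.trans hc'.symm) hcc'
    have himg : O '' {c | c.card = (k : ℕ) + 1} =
        {S | ∃ c : Finset (ℕ × ℕ), c.card = (k : ℕ) + 1 ∧ O c = S} := by
      ext S; simp [Set.mem_image]
    constructor
    · apply hdisjA
      · rintro _ ⟨c, -, rfl⟩; exact hOopen c
      · rw [himg]; exact hdisjfam
      · rintro _ ⟨c, hc, rfl⟩
        have hc' : c.card = (k : ℕ) + 1 := hc
        exact (hOA c (Finset.card_pos.1 (by omega))).1
    · apply hdisjB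
      · rintro _ ⟨c, -, rfl⟩; exact hOopen c
      · rw [himg]; exact hdisjfam
      · rintro _ ⟨c, hc, rfl⟩
        have hc' : c.card = (k : ℕ) + 1 := hc
        exact (hOA c (Finset.card_pos.1 (by omega))).2

theorem cover_aux {C : Type*} [TopologicalSpace C] [NormalSpace C] :
    ∀ (r : ℕ) (A : Fin r → Set C → Prop) (n : Fin r → ℕ),
    (∀ i, ∀ U V : Set C, IsOpen U → IsOpen V → V ⊆ U → A i U → A i V) →
    (∀ i, ∀ 𝒱 : Set (Set C), (∀ V ∈ 𝒱, IsOpen V) → 𝒱.PairwiseDisjoint id →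
      (∀ V ∈ 𝒱, A i V) → A i (⋃₀ 𝒱)) →
    (∀ i, ∃ U : Fin (n i + 1) → Set C,
      (∀ j, IsOpen (U j)) ∧ (⋃ j, U j) = Set.univ ∧ ∀ j, A i (U j)) →
    ∃ U : Fin ((∑ i, n i) + 1) → Set C,
      (∀ j, IsOpen (U j)) ∧ (⋃ j, U j) = Set.univ ∧ ∀ j, ∀ i, A i (U j)
  | 0, A, n, _, _, _ => by
      refine ⟨fun _ => Set.univ, fun _ => isOpen_univ, ?_, fun j i => i.elim0⟩
      exact Set.iUnion_eq_univ_iff.2 fun x => ⟨0, Set.mem_univ x⟩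
  | (r+1), A, n, hsub, hdisj, hcov => by
      obtain ⟨U', hU'o, hU'c, hU'A⟩ := cover_aux r (fun i => A i.castSucc)
        (fun i => n i.castSucc) (fun i => hsub i.castSucc) (fun i => hdisj i.castSucc)
        (fun i => hcov i.castSucc)
      obtain ⟨V, hVo, hVc, hVB⟩ := hcov (Fin.last r)
      obtain ⟨W, hWo, hWc, hWAB⟩ := combine_two (fun S => ∀ i : Fin r, A i.castSucc S)
        (A (Fin.last r))
        (fun U V hU hV hVU h i => hsub i.castSucc U V hU hV hVU (h i))
        (fun 𝒱 h1 h2 h3 i => hdisj i.castSucc 𝒱 h1 h2 (fun V hV => h3 V hV i))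
        (hsub _) (hdisj _) U' hU'o hU'c hU'A V hVo hVc hVB
      have hN : (∑ i : Fin (r+1), n i) + 1 = (∑ i : Fin r, n i.castSucc) + n (Fin.last r) + 1 := by
        rw [Fin.sum_univ_castSucc]
      refine ⟨fun j => W (Fin.cast hN j), fun j => hWo _, ?_, ?_⟩
      · rw [Set.iUnion_eq_univ_iff]
        intro x
        obtain ⟨k, hk⟩ := Set.iUnion_eq_univ_iff.mp hWc x
        refine ⟨Fin.cast hN.symm k, ?_⟩
        have : Fin.cast hN (Fin.cast hN.symm k) = k := by ext; simp
        rw [this]; exact hk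
      · intro j i
        refine Fin.lastCases ?_ ?_ i
        · exact (hWAB _).2
        · exact fun i' => (hWAB _).1 i'

/-- If a normal space `C` admits, for each `i = 1, …, r`, an open cover by
`n_i + 1` open sets satisfying a property `A_i` which is inherited by open subsets and by
disjoint unions of open sets, then `C` admits an open cover by `N + 1` open sets,
`N = n_1 + ⋯ + n_r`, each satisfying all the properties `A_1, …, A_r` simultaneously. -/
theorem cover_combination {C : Type*} [TopologicalSpace C] [NormalSpace C]
    (r : ℕ) (hr : 1 ≤ r) (A : Fin r → Set C → Prop) (n : Fin r → ℕ)
    (hsub : ∀ i, ∀ U V : Set C, IsOpen U → IsOpen V → V ⊆ U → A i U → A i V)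
    (hdisj : ∀ i, ∀ 𝒱 : Set (Set C), (∀ V ∈ 𝒱, IsOpen V) → 𝒱.PairwiseDisjoint id →
      (∀ V ∈ 𝒱, A i V) → A i (⋃₀ 𝒱))
    (hcov : ∀ i, ∃ U : Fin (n i + 1) → Set C,
      (∀ j, IsOpen (U j)) ∧ (⋃ j, U j) = Set.univ ∧ ∀ j, A i (U j)) :
    ∃ U : Fin ((∑ i, n i) + 1) → Set C,
      (∀ j, IsOpen (U j)) ∧ (⋃ j, U j) = Set.univ ∧ ∀ j, ∀ i, A i (U j) :=
  cover_aux r A n hsub hdisj hcov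
end

section
/- Let E_r →^{p_r} E_{r-1} →^{p_{r-1}} ⋯ →^{p_1} E_0 be a tower of continuous maps between normal topological spaces, and let p = p_1 ∘ p_2 ∘ ⋯ ∘ p_r : E_r → E_0 be the composite. Then secat[p_1 : E_1 → E_0] ≤ secat[p : E_r → E_0] ≤ secat[p_1 : E_1 → E_0] + Σ_{i=1}^{r-1} secat_{(p_1∘p_2∘⋯∘p_i)}[p_{i+1} : E_{i+1} → E_i], where p_1∘p_2∘⋯∘p_i : E_i → E_0 denotes the composite. -/
/-- The sectional category of a continuous map `p : E → B`: the least `n` such that `B`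
admits a cover by `n+1` open sets, each admitting a continuous section of `p`. -/
noncomputable def secat {E B : Type*} [TopologicalSpace E] [TopologicalSpace B]
    (p : C(E, B)) : ℕ∞ :=
  sInf {n : ℕ∞ | ∃ m : ℕ, n = m ∧ ∃ U : Fin (m + 1) → Set B,
    (∀ i, IsOpen (U i)) ∧ (⋃ i, U i) = Set.univ ∧
    ∀ i, ∃ s : C((U i : Set B), E), ∀ x, p (s x) = (x : B)}

/-- The relative sectional category `secat_f[p : E → B]` of `p : E → B` with respect to
`f : B → C`: the least `n` such that there are open sets `U_0, …, U_n ⊆ C` with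
`f(B) ⊆ U_0 ∪ ⋯ ∪ U_n` and `p` admitting a continuous section over each `f⁻¹(U_i)`. -/
noncomputable def secatf {E B C : Type*} [TopologicalSpace E] [TopologicalSpace B]
    [TopologicalSpace C] (p : C(E, B)) (f : C(B, C)) : ℕ∞ :=
  sInf {n : ℕ∞ | ∃ m : ℕ, n = m ∧ ∃ U : Fin (m + 1) → Set C,
    (∀ i, IsOpen (U i)) ∧ Set.range f ⊆ (⋃ i, U i) ∧
    ∀ i, ∃ s : C((⇑f ⁻¹' U i : Set B), E), ∀ x, p (s x) = (x : B)}

/-- Given a tower of maps `p i : E (i+1) → E i` (so `p ⟨i-1,_⟩` is the paper's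
`p_i : E_i → E_{i-1}`), `finComps p i` is the composite `p_1 ∘ p_2 ∘ ⋯ ∘ p_i : E_i → E_0`. -/
noncomputable def finComps {r : ℕ} {E : Fin (r + 1) → Type*} [∀ i, TopologicalSpace (E i)]
    (p : ∀ i : Fin r, C(E i.succ, E i.castSucc)) (i : Fin (r + 1)) : C(E i, E 0) :=
  Fin.induction (ContinuousMap.id _) (fun j ih => ih.comp (p j)) i

open Set

section Aux

variable {X : Type*} [TopologicalSpace X]

/-- `q` admits a continuous section over `D`. -/
def HasSec {E : Type*} [TopologicalSpace E] (q : C(E, X)) (D : Set X) : Prop :=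
  ∃ s : C(D, E), ∀ x, q (s x) = (x : X)

lemma HasSec.mono {E : Type*} [TopologicalSpace E] {q : C(E, X)} {D D' : Set X}
    (h : HasSec q D) (hsub : D' ⊆ D) : HasSec q D' := by
  obtain ⟨s, hs⟩ := h
  exact ⟨s.comp ⟨Set.inclusion hsub, continuous_inclusion hsub⟩, fun x => hs _⟩

lemma HasSec.iUnion_of_disjoint {E : Type*} [TopologicalSpace E] {q : C(E, X)} {ι : Type*}
    {A : ι → Set X} (hop : ∀ a, IsOpen (A a))
    (hdis : ∀ a b, a ≠ b → Disjoint (A a) (A b))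
    (hsec : ∀ a, HasSec q (A a)) : HasSec q (⋃ a, A a) := by
  classical
  by_cases hE : Nonempty E
  · obtain ⟨e₀⟩ := hE
    choose s hs using hsec
    set glob : X → E := fun x =>
      if h : ∃ a, x ∈ A a then s h.choose ⟨x, h.choose_spec⟩ else e₀ with hglob
    have key : ∀ a, ∀ x, ∀ hx : x ∈ A a, glob x = s a ⟨x, hx⟩ := by
      intro a x hx
      have hex : ∃ b, x ∈ A b := ⟨a, hx⟩
      have hb : hex.choose = a := by
        by_contra hne
        exact Set.disjoint_left.mp (hdis _ _ hne) hex.choose_spec hx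
      simp only [hglob, dif_pos hex]
      subst hb
      rfl
    have cont : ContinuousOn glob (⋃ a, A a) := by
      refine continuousOn_of_forall_continuousAt fun x hx => ?_
      obtain ⟨a, hxa⟩ := mem_iUnion.mp hx
      have h1 : ContinuousOn glob (A a) := by
        rw [continuousOn_iff_continuous_restrict]
        have : (A a).restrict glob = fun y => s a y := by
          funext y; exact key a y.1 y.2
        rw [show (A a).domRestrict glob = (A a).restrict glob from rfl, this]
        exact (s a).continuous
      exact h1.continuousAt ((hop a).mem_nhds hxa)
    refine ⟨⟨(⋃ a, A a).restrict glob, continuousOn_iff_continuous_restrict.mp cont⟩,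
      fun x => ?_⟩
    obtain ⟨a, hxa⟩ := mem_iUnion.mp x.2
    show q (glob x.1) = x.1
    rw [key a x.1 hxa, hs a]
  · have hempty : ∀ a, A a = ∅ := by
      intro a
      by_contra h
      obtain ⟨x, hx⟩ := Set.nonempty_iff_ne_empty.mpr h
      obtain ⟨sa, _⟩ := hsec a
      exact hE ⟨sa ⟨x, hx⟩⟩
    have hU : (⋃ a, A a) = (∅ : Set X) := by simp [hempty]
    have hIE : IsEmpty ((⋃ a, A a) : Set X) := by rw [hU]; infer_instance
    refine ⟨⟨fun x => isEmptyElim x, continuous_def.mpr fun u _ => ?_⟩, fun x => isEmptyElim x⟩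
    rw [Set.eq_empty_of_isEmpty ((fun x => isEmptyElim x : _ → E) ⁻¹' u)]
    exact isOpen_empty

lemma exists_bump [NormalSpace X] {N : ℕ} {U : Fin N → Set X}
    (hop : ∀ i, IsOpen (U i)) (hcov : (⋃ i, U i) = univ) :
    ∃ φ : Fin N → C(X, ℝ), (∀ i x, 0 ≤ φ i x) ∧ (∀ i x, 0 < φ i x → x ∈ U i) ∧
      ∀ x, ∃ i, 0 < φ i x := by
  obtain ⟨v, hvU, hvo, hvc⟩ :=
    exists_iUnion_eq_closure_subset hop (fun x => Set.toFinite _) hcov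
  have hdisj : ∀ i, Disjoint ((U i)ᶜ) (closure (v i)) := fun i =>
    Set.disjoint_left.mpr fun x hxc hxcl => hxc (hvc i hxcl)
  choose φ h0 h1 h01 using fun i =>
    exists_continuous_zero_one_of_isClosed (isClosed_compl_iff.mpr (hop i))
      isClosed_closure (hdisj i)
  refine ⟨φ, fun i x => (h01 i x).1, fun i x hpos => ?_, fun x => ?_⟩
  · by_contra hx
    have : φ i x = 0 := h0 i hx
    rw [this] at hpos; exact lt_irrefl 0 hpos
  · have : x ∈ ⋃ i, v i := hvU ▸ mem_univ x
    obtain ⟨i, hxi⟩ := mem_iUnion.mp this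
    refine ⟨i, ?_⟩
    have : φ i x = 1 := h1 i (subset_closure hxi)
    rw [this]; norm_num

end Aux

section Comb

variable {X : Type*} [TopologicalSpace X]

lemma exists_combined_cover [NormalSpace X] {n m : ℕ}
    {U : Fin (n + 1) → Set X} {V : Fin (m + 1) → Set X}
    (hUo : ∀ i, IsOpen (U i)) (hUc : (⋃ i, U i) = univ)
    (hVo : ∀ j, IsOpen (V j)) (hVc : (⋃ j, V j) = univ) :
    ∃ W : Fin (n + m + 1) → Set X,
      (∀ c, IsOpen (W c)) ∧ (⋃ c, W c) = univ ∧
      ∀ c, ∃ (ι : Type) (A : ι → Set X), (∀ a, IsOpen (A a)) ∧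
        (∀ a b, a ≠ b → Disjoint (A a) (A b)) ∧ W c = ⋃ a, A a ∧
        ∀ a, ∃ i j, A a ⊆ U i ∩ V j := by
  classical
  obtain ⟨φ, hφ0, hφU, hφc⟩ := exists_bump hUo hUc
  obtain ⟨ψ, hψ0, hψV, hψc⟩ := exists_bump hVo hVc
  set κ := Sum (Fin (n + 1)) (Fin (m + 1)) with hκ
  set χ : κ → C(X, ℝ) := Sum.elim φ ψ with hχ
  have hχ0 : ∀ k x, 0 ≤ χ k x := by rintro (i | j) x <;> [exact hφ0 i x; exact hψ0 j x]
  set AS : Finset κ → Set X := fun S =>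
    ⋂ a ∈ S, ({x | 0 < χ a x} ∩ ⋂ b ∈ (Sᶜ : Finset κ), {x | χ b x < χ a x}) with hAS
  have memAS : ∀ S x, x ∈ AS S ↔
      ∀ a ∈ S, 0 < χ a x ∧ ∀ b, b ∉ S → χ b x < χ a x := by
    intro S x
    simp [hAS, Set.mem_iInter, Finset.mem_compl]
  have hASopen : ∀ S, IsOpen (AS S) := by
    intro S
    refine isOpen_biInter_finset fun a _ => ?_
    exact (isOpen_lt continuous_const (χ a).continuous).inter
      (isOpen_biInter_finset fun b _ => isOpen_lt (χ b).continuous (χ a).continuous)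
  have hASsub : ∀ S a, a ∈ S → ∀ x, x ∈ AS S → 0 < χ a x := by
    intro S a ha x hx
    exact ((memAS S x).mp hx a ha).1
  have hASdisj : ∀ S T : Finset κ, S ≠ T → S.card = T.card → Disjoint (AS S) (AS T) := by
    intro S T hne hcard
    rw [Set.disjoint_left]
    intro x hxS hxT
    have hST : ¬S ⊆ T := fun h => hne (Finset.eq_of_subset_of_card_le h hcard.ge)
    have hTS : ¬T ⊆ S := fun h => hne (Finset.eq_of_subset_of_card_le h hcard.le).symm
    obtain ⟨a, haS, haT⟩ := Finset.not_subset.mp hST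
    obtain ⟨b, hbT, hbS⟩ := Finset.not_subset.mp hTS
    have h1 : χ b x < χ a x := ((memAS S x).mp hxS a haS).2 b hbS
    have h2 : χ a x < χ b x := ((memAS T x).mp hxT b hbT).2 a haT
    exact lt_asymm h1 h2
  -- the support finset of a point
  set Sx : X → Finset κ := fun x => Finset.univ.filter (fun k => 0 < χ k x) with hSx
  have hxmem : ∀ x, x ∈ AS (Sx x) := by
    intro x
    rw [memAS]
    intro a ha
    rw [hSx, Finset.mem_filter] at ha
    refine ⟨ha.2, fun b hb => ?_⟩
    rw [hSx, Finset.mem_filter] at hb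
    push_neg at hb
    exact lt_of_le_of_lt (hb (Finset.mem_univ b)) ha.2
  have hSxl : ∀ x, ∃ i, Sum.inl i ∈ Sx x := by
    intro x; obtain ⟨i, hi⟩ := hφc x
    exact ⟨i, by simp [hSx, hχ, hi]⟩
  have hSxr : ∀ x, ∃ j, Sum.inr j ∈ Sx x := by
    intro x; obtain ⟨j, hj⟩ := hψc x
    exact ⟨j, by simp [hSx, hχ, hj]⟩
  have hcard2 : ∀ x, 2 ≤ (Sx x).card := by
    intro x
    obtain ⟨i, hi⟩ := hSxl x
    obtain ⟨j, hj⟩ := hSxr x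
    have hsub : ({Sum.inl i, Sum.inr j} : Finset κ) ⊆ Sx x := by
      intro k hk
      rcases Finset.mem_insert.mp hk with rfl | hk
      · exact hi
      · rwa [Finset.mem_singleton.mp hk]
    calc 2 = ({Sum.inl i, Sum.inr j} : Finset κ).card := by
            rw [Finset.card_insert_of_notMem (by simp), Finset.card_singleton]
      _ ≤ (Sx x).card := Finset.card_le_card hsub
  have hcardle : ∀ S : Finset κ, S.card ≤ n + m + 2 := by
    intro S
    have h := Finset.card_le_univ S
    have h2 : Fintype.card κ = n + m + 2 := by
      simp [hκ, Fintype.card_sum]; omega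
    omega
  -- build the cover W
  refine ⟨fun c => ⋃ S : {S : Finset κ // S.card = c.val + 2 ∧ (∃ i, Sum.inl i ∈ S) ∧
      ∃ j, Sum.inr j ∈ S}, AS S.1, fun c => isOpen_iUnion fun S => hASopen S.1, ?_, fun c => ?_⟩
  · rw [eq_univ_iff_forall]
    intro x
    have h2 := hcard2 x
    have hle := hcardle (Sx x)
    simp only [mem_iUnion]
    have hc : (Sx x).card - 2 < n + m + 1 := by omega
    refine ⟨⟨(Sx x).card - 2, hc⟩, ⟨Sx x, ?_, hSxl x, hSxr x⟩, hxmem x⟩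
    show (Sx x).card = (Sx x).card - 2 + 2
    omega
  · refine ⟨{S : Finset κ // S.card = c.val + 2 ∧ (∃ i, Sum.inl i ∈ S) ∧ ∃ j, Sum.inr j ∈ S},
      fun S => AS S.1, fun S => hASopen S.1, ?_, rfl, ?_⟩
    · rintro S T hne
      refine hASdisj S.1 T.1 (fun h => hne (Subtype.ext h)) ?_
      rw [S.2.1, T.2.1]
    · rintro ⟨S, hcard, ⟨i, hi⟩, ⟨j, hj⟩⟩
      refine ⟨i, j, fun x hx => ⟨hφU i x ?_, hψV j x ?_⟩⟩
      · exact hASsub S _ hi x hx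
      · exact hASsub S _ hj x hx

end Comb

section SecatLemmas

variable {E B C : Type*} [TopologicalSpace E] [TopologicalSpace B] [TopologicalSpace C]

lemma secat_le_comp (g : C(E, B)) (f : C(B, C)) : secat f ≤ secat (f.comp g) := by
  apply le_sInf
  rintro b ⟨n, rfl, U, hUo, hUc, hUs⟩
  apply sInf_le
  refine ⟨n, rfl, U, hUo, hUc, fun i => ?_⟩
  obtain ⟨s, hs⟩ := hUs i
  exact ⟨g.comp s, fun x => hs x⟩

lemma secat_id_le (X : Type*) [TopologicalSpace X] :
    secat (ContinuousMap.id X) ≤ 0 := by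
  apply sInf_le
  refine ⟨0, by norm_num, fun _ => Set.univ, fun _ => isOpen_univ, Set.iUnion_const _, fun i => ?_⟩
  exact ⟨⟨Subtype.val, continuous_subtype_val⟩, fun x => rfl⟩

lemma secat_comp_le [NormalSpace C] (g : C(E, B)) (f : C(B, C)) :
    secat (f.comp g) ≤ secat f + secatf g f := by
  classical
  by_cases h1 : secat f = ⊤
  · rw [h1, top_add]; exact le_top
  by_cases h2 : secatf g f = ⊤
  · rw [h2, add_top]; exact le_top
  have hne1 : {n : ℕ∞ | ∃ m : ℕ, n = m ∧ ∃ U : Fin (m + 1) → Set C,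
      (∀ i, IsOpen (U i)) ∧ (⋃ i, U i) = Set.univ ∧
      ∀ i, ∃ s : C((U i : Set C), B), ∀ x, f (s x) = (x : C)}.Nonempty := by
    rw [Set.nonempty_iff_ne_empty]
    intro h
    exact h1 (by rw [secat, h, sInf_empty])
  have hne2 : {n : ℕ∞ | ∃ m : ℕ, n = m ∧ ∃ U : Fin (m + 1) → Set C,
      (∀ i, IsOpen (U i)) ∧ Set.range f ⊆ (⋃ i, U i) ∧
      ∀ i, ∃ s : C((⇑f ⁻¹' U i : Set B), E), ∀ x, g (s x) = (x : B)}.Nonempty := by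
    rw [Set.nonempty_iff_ne_empty]
    intro h
    exact h2 (by rw [secatf, h, sInf_empty])
  obtain ⟨n, hn, U, hUo, hUc, hUs⟩ : secat f ∈ _ := csInf_mem hne1
  obtain ⟨m, hm, V, hVo, hVsub, hVs⟩ : secatf g f ∈ _ := csInf_mem hne2
  rw [hn, hm]
  -- f is surjective on ⋃ V
  have hVc : (⋃ j, V j) = Set.univ := by
    rw [Set.eq_univ_iff_forall]
    intro x
    apply hVsub
    have hx : x ∈ ⋃ i, U i := hUc ▸ Set.mem_univ x
    obtain ⟨i, hxi⟩ := Set.mem_iUnion.mp hx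
    obtain ⟨s, hs⟩ := hUs i
    exact ⟨s ⟨x, hxi⟩, hs _⟩
  -- sections of f.comp g over U i ∩ V j
  have hsec : ∀ i j, HasSec (f.comp g) (U i ∩ V j) := by
    intro i j
    obtain ⟨s, hs⟩ := hUs i
    obtain ⟨t, ht⟩ := hVs j
    refine ⟨⟨fun x => t ⟨s ⟨x.1, x.2.1⟩, ?_⟩, ?_⟩, fun x => ?_⟩
    · show f (s ⟨x.1, x.2.1⟩) ∈ V j
      rw [hs]
      exact x.2.2
    · exact t.continuous.comp (Continuous.subtype_mk
        (s.continuous.comp (Continuous.subtype_mk continuous_subtype_val _)) _)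
    · show f (g (t _)) = (x : C)
      rw [ht]
      exact hs _
  obtain ⟨W, hWo, hWc, hWd⟩ := exists_combined_cover hUo hUc hVo hVc
  have : ((n : ℕ∞) + m) = ((n + m : ℕ) : ℕ∞) := by push_cast; ring
  rw [this]
  apply sInf_le
  refine ⟨n + m, rfl, W, hWo, hWc, fun c => ?_⟩
  obtain ⟨ι, A, hAo, hAd, hWA, hAsub⟩ := hWd c
  have : HasSec (f.comp g) (W c) := by
    rw [hWA]
    refine HasSec.iUnion_of_disjoint hAo hAd fun a => ?_
    obtain ⟨i, j, hij⟩ := hAsub a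
    exact (hsec i j).mono hij
  exact this

end SecatLemmas

/-- For a tower `E_r → E_{r-1} → ⋯ → E_0` of continuous maps between normal
spaces with total composite `p = p_1 ∘ ⋯ ∘ p_r : E_r → E_0`, one has
`secat[p_1] ≤ secat[p] ≤ secat[p_1] + Σ_{i=1}^{r-1} secat_{p_1⋯p_i}[p_{i+1}]`. -/
theorem secat_tower {r : ℕ} (hr : 0 < r) {E : Fin (r + 1) → Type*}
    [∀ i, TopologicalSpace (E i)] [∀ i, NormalSpace (E i)]
    (p : ∀ i : Fin r, C(E i.succ, E i.castSucc)) :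
    secat (p ⟨0, hr⟩) ≤ secat (finComps p (Fin.last r)) ∧
    secat (finComps p (Fin.last r)) ≤
      secat (p ⟨0, hr⟩) +
        ∑ i ∈ Finset.univ.erase (⟨0, hr⟩ : Fin r),
          secatf (p i) (finComps p i.castSucc) := by
  classical
  have hzero : finComps p 0 = ContinuousMap.id (E 0) := rfl
  have hstep : ∀ i : Fin r, finComps p i.succ = (finComps p i.castSucc).comp (p i) :=
    fun i => rfl
  constructor
  · -- part 1
    have fact : ∀ i : Fin (r + 1), 0 < i.val →
        ∃ h : C(E i, E ((⟨0, hr⟩ : Fin r).succ)),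
          finComps p i = (p ⟨0, hr⟩).comp h := by
      intro i
      induction i using Fin.induction with
      | zero => intro h; exact absurd h (lt_irrefl 0)
      | succ i ih =>
        intro _
        by_cases hi : i = ⟨0, hr⟩
        · subst hi
          exact ⟨ContinuousMap.id _, (ContinuousMap.comp_id (p ⟨0, hr⟩)).symm⟩
        · have hpos : 0 < (i.castSucc).val := by
            have : i.val ≠ 0 := fun h => hi (Fin.ext h)
            simpa [Fin.coe_castSucc] using Nat.pos_of_ne_zero this
          obtain ⟨h, hh⟩ := ih hpos
          refine ⟨h.comp (p i), ?_⟩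
          rw [hstep, hh]; rfl
    obtain ⟨h, hh⟩ := fact (Fin.last r) (by simpa [Fin.last] using hr)
    rw [hh]
    exact secat_le_comp h (p ⟨0, hr⟩)
  · -- part 2
    have key : ∀ i : Fin (r + 1),
        secat (finComps p i) ≤ secat (p ⟨0, hr⟩) +
          ∑ j ∈ Finset.univ.filter
            (fun j : Fin r => j ≠ ⟨0, hr⟩ ∧ j.castSucc < i),
            secatf (p j) (finComps p j.castSucc) := by
      intro i
      induction i using Fin.induction with
      | zero =>
        rw [hzero]
        exact le_trans (secat_id_le (E 0)) zero_le
      | succ i ih =>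
        by_cases hi : i = ⟨0, hr⟩
        · subst hi
          have hfilt : Finset.univ.filter
              (fun j : Fin r => j ≠ ⟨0, hr⟩ ∧ j.castSucc < (⟨0, hr⟩ : Fin r).succ)
              = ∅ := by
            ext j
            simp only [Finset.mem_filter, Finset.mem_univ, true_and,
              Finset.notMem_empty, iff_false, not_and]
            intro hne hlt
            exact hne (Fin.ext (Nat.lt_one_iff.mp hlt))
          rw [hfilt, Finset.sum_empty, add_zero]
          exact le_of_eq rfl
        · have hfilt : Finset.univ.filter
              (fun j : Fin r => j ≠ ⟨0, hr⟩ ∧ j.castSucc < i.succ)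
              = insert i (Finset.univ.filter
                (fun j : Fin r => j ≠ ⟨0, hr⟩ ∧ j.castSucc < i.castSucc)) := by
            ext j
            simp only [Finset.mem_filter, Finset.mem_univ, true_and, Finset.mem_insert]
            constructor
            · rintro ⟨hne, hlt⟩
              have hlt' : j.val < i.val + 1 := hlt
              rcases Nat.lt_succ_iff_lt_or_eq.mp hlt' with h | h
              · exact Or.inr ⟨hne, h⟩
              · exact Or.inl (Fin.ext h)
            · rintro (rfl | ⟨hne, hlt⟩)
              · exact ⟨hi, Nat.lt_succ_self _⟩
              · exact ⟨hne, Nat.lt_succ_of_lt hlt⟩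
          have hnotmem : i ∉ Finset.univ.filter
              (fun j : Fin r => j ≠ ⟨0, hr⟩ ∧ j.castSucc < i.castSucc) := by
            simp [Finset.mem_filter]
          rw [hstep, hfilt, Finset.sum_insert hnotmem]

          calc secat ((finComps p i.castSucc).comp (p i))
              ≤ secat (finComps p i.castSucc) +
                secatf (p i) (finComps p i.castSucc) :=
              secat_comp_le (p i) (finComps p i.castSucc)
            _ ≤ (secat (p ⟨0, hr⟩) +
                ∑ j ∈ Finset.univ.filter
                  (fun j : Fin r => j ≠ ⟨0, hr⟩ ∧ j.castSucc < i.castSucc),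
                  secatf (p j) (finComps p j.castSucc)) +
                secatf (p i) (finComps p i.castSucc) :=
              add_le_add_left ih _
            _ = secat (p ⟨0, hr⟩) +
                (secatf (p i) (finComps p i.castSucc) +
                ∑ j ∈ Finset.univ.filter
                  (fun j : Fin r => j ≠ ⟨0, hr⟩ ∧ j.castSucc < i.castSucc),
                  secatf (p j) (finComps p j.castSucc)) := by
              rw [add_assoc, add_comm (∑ j ∈ Finset.univ.filter
                (fun j : Fin r => j ≠ ⟨0, hr⟩ ∧ j.castSucc < i.castSucc),
                secatf (p j) (finComps p j.castSucc))]
    have hfin : Finset.univ.erase (⟨0, hr⟩ : Fin r) = Finset.univ.filter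
        (fun j : Fin r => j ≠ ⟨0, hr⟩ ∧ j.castSucc < Fin.last r) := by
      ext j
      simp only [Finset.mem_erase, Finset.mem_univ, and_true, Finset.mem_filter, true_and]
      constructor
      · intro h
        exact ⟨h, j.isLt⟩
      · rintro ⟨h, _⟩; exact h
    rw [hfin]
    exact key (Fin.last r)
end

section
/- Let p : E → B be a continuous map and let f : B → C and f' : B → C' be continuous maps. (a) If there is a continuous map h : C → C' such that f' = h ∘ f, then secat_f[p] ≤ secat_{f'}[p]. (b) If moreover h restricts to a homeomorphism from f(B) onto f'(B) (both with their subspace topologies), then secat_f[p] = secat_{f'}[p]. -/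
lemma secatf_le_aux {E B C C' : Type*} [TopologicalSpace E] [TopologicalSpace B]
    [TopologicalSpace C] [TopologicalSpace C'] (p : C(E, B)) (f : C(B, C)) (f' : C(B, C'))
    (key : ∀ V : Set C', IsOpen V → ∃ U : Set C, IsOpen U ∧ ⇑f ⁻¹' U = ⇑f' ⁻¹' V ∧
      ∀ b, f' b ∈ V → f b ∈ U) :
    (sInf {n : ℕ∞ | ∃ m : ℕ, n = m ∧ ∃ U : Fin (m + 1) → Set C,
      (∀ i, IsOpen (U i)) ∧ Set.range f ⊆ (⋃ i, U i) ∧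
      ∀ i, ∃ s : C((⇑f ⁻¹' U i : Set B), E), ∀ x, p (s x) = (x : B)}) ≤
    (sInf {n : ℕ∞ | ∃ m : ℕ, n = m ∧ ∃ U : Fin (m + 1) → Set C',
      (∀ i, IsOpen (U i)) ∧ Set.range f' ⊆ (⋃ i, U i) ∧
      ∀ i, ∃ s : C((⇑f' ⁻¹' U i : Set B), E), ∀ x, p (s x) = (x : B)}) := by
  apply sInf_le_sInf
  rintro n ⟨m, rfl, V, hVopen, hVcov, hVsec⟩
  refine ⟨m, rfl, fun i => (key (V i) (hVopen i)).choose, fun i => (key _ (hVopen i)).choose_spec.1,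
    ?_, ?_⟩
  · rintro c ⟨b, rfl⟩
    obtain ⟨_, ⟨i, rfl⟩, hi⟩ := hVcov ⟨b, rfl⟩
    exact Set.mem_iUnion.2 ⟨i, (key _ (hVopen i)).choose_spec.2.2 b hi⟩
  · intro i
    have heq := (key (V i) (hVopen i)).choose_spec.2.1
    rw [heq]
    exact hVsec i

theorem secatf_key_fwd {E B C C' : Type*} [TopologicalSpace E] [TopologicalSpace B]
    [TopologicalSpace C] [TopologicalSpace C'] (p : C(E, B)) (f : C(B, C)) (f' : C(B, C'))
    (h : C(C, C')) (hcomp : ∀ b, f' b = h (f b)) :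
    (∀ V : Set C', IsOpen V → ∃ U : Set C, IsOpen U ∧ ⇑f ⁻¹' U = ⇑f' ⁻¹' V ∧
      ∀ b, f' b ∈ V → f b ∈ U) := by
  intro V hV
  refine ⟨h ⁻¹' V, hV.preimage h.continuous, ?_, fun b hb => ?_⟩
  · ext b; simp [hcomp b]
  · simpa [← hcomp b] using hb

lemma secatf_key_rev {B C C' : Type*} [TopologicalSpace B]
    [TopologicalSpace C] [TopologicalSpace C'] (f : C(B, C)) (f' : C(B, C'))
    (h : C(C, C')) (hcomp : ∀ b, f' b = h (f b))
    (e : (Set.range f : Set C) ≃ₜ (Set.range f' : Set C'))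
    (he : ∀ x : (Set.range f : Set C), (e x : C') = h (x : C)) :
    ∀ U : Set C, IsOpen U → ∃ V : Set C', IsOpen V ∧ ⇑f' ⁻¹' V = ⇑f ⁻¹' U ∧
      ∀ b, f b ∈ U → f' b ∈ V := by
  intro U hU
  have hS : IsOpen (e '' (Subtype.val ⁻¹' U)) :=
    e.isOpenMap _ (hU.preimage continuous_subtype_val)
  obtain ⟨V, hVopen, hVeq⟩ := isOpen_induced_iff.1 hS
  have keypt : ∀ b : B, e ⟨f b, ⟨b, rfl⟩⟩ = ⟨f' b, ⟨b, rfl⟩⟩ := by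
    intro b
    apply Subtype.ext
    rw [he ⟨f b, ⟨b, rfl⟩⟩]
    exact (hcomp b).symm
  refine ⟨V, hVopen, ?_, ?_⟩
  · ext b
    have : f' b ∈ V ↔ (⟨f' b, ⟨b, rfl⟩⟩ : (Set.range f' : Set C')) ∈
        (Subtype.val ⁻¹' V : Set (Set.range f' : Set C')) := Iff.rfl
    simp only [Set.mem_preimage]
    rw [this, hVeq, ← keypt b]
    constructor
    · rintro hmem
      have := e.injective
      obtain ⟨x, hx, hxe⟩ := hmem
      have : x = ⟨f b, ⟨b, rfl⟩⟩ := e.injective hxe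
      subst this
      exact hx
    · intro hb
      exact ⟨⟨f b, ⟨b, rfl⟩⟩, hb, rfl⟩
  · intro b hb
    have : (⟨f' b, ⟨b, rfl⟩⟩ : (Set.range f' : Set C')) ∈ (Subtype.val ⁻¹' V) := by
      rw [hVeq, ← keypt b]
      exact ⟨⟨f b, ⟨b, rfl⟩⟩, hb, rfl⟩
    exact this

/-- Let `p : E → B`, `f : B → C`, `f' : B → C'` be continuous, and let
`h : C → C'` be continuous with `f' = h ∘ f`. Then (a) `secat_f[p] ≤ secat_{f'}[p]`;
and (b) if moreover `h` restricts to a homeomorphism from `f(B)` onto `f'(B)`, then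
`secat_f[p] = secat_{f'}[p]`. -/
theorem secatf_dependence_on_f {E B C C' : Type*} [TopologicalSpace E] [TopologicalSpace B]
    [TopologicalSpace C] [TopologicalSpace C'] (p : C(E, B)) (f : C(B, C)) (f' : C(B, C'))
    (h : C(C, C')) (hcomp : ∀ b, f' b = h (f b)) :
    secatf p f ≤ secatf p f' ∧
    ((∃ e : (Set.range f : Set C) ≃ₜ (Set.range f' : Set C'),
        ∀ x : (Set.range f : Set C), (e x : C') = h (x : C)) →
      secatf p f = secatf p f') := by
  constructor
  · exact secatf_le_aux p f f' (secatf_key_fwd p f f' h hcomp)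
  · rintro ⟨e, he⟩
    exact le_antisymm (secatf_le_aux p f f' (secatf_key_fwd p f f' h hcomp))
      (secatf_le_aux p f' f (secatf_key_rev f f' h hcomp e he))
end

section
/- Let p : E → B and α : B' → B be continuous maps, and let p' : E' → B' be the pullback of p along α, i.e., E' = {(b', e) ∈ B' × E : α(b') = p(e)} with the subspace topology and p'(b', e) = b'. Let f : B → C be continuous and set f' = f ∘ α : B' → C. Then secat_{f'}[p' : E' → B'] ≤ secat_f[p : E → B]. -/
/-- Let `p' : E' → B'` be the pullback of `p : E → B` along `α : B' → B`,
where `E' = {(b', e) : α(b') = p(e)}` and `p'(b', e) = b'`. For `f : B → C` and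
`f' = f ∘ α` one has `secat_{f'}[p'] ≤ secat_f[p]`. -/
theorem secatf_pullback {E B B' C : Type*} [TopologicalSpace E] [TopologicalSpace B]
    [TopologicalSpace B'] [TopologicalSpace C] (p : C(E, B)) (α : C(B', B)) (f : C(B, C)) :
    secatf (⟨fun x : {q : B' × E // α q.1 = p q.2} => x.1.1,
        (continuous_fst.comp continuous_subtype_val)⟩ :
        C({q : B' × E // α q.1 = p q.2}, B'))
      (f.comp α) ≤ secatf p f := by
  apply sInf_le_sInf
  rintro n ⟨m, rfl, U, hopen, hcov, hsec⟩
  refine ⟨m, rfl, U, hopen, ?_, ?_⟩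
  · rintro c ⟨b', rfl⟩
    exact hcov ⟨α b', rfl⟩
  · intro i
    obtain ⟨s, hs⟩ := hsec i
    refine ⟨⟨fun x => ⟨(x.1, s ⟨α x.1, x.2⟩), (hs ⟨α x.1, x.2⟩).symm⟩, ?_⟩, fun x => rfl⟩
    apply Continuous.subtype_mk
    refine continuous_subtype_val.prodMk (s.continuous.comp ?_)
    exact Continuous.subtype_mk (α.continuous.comp continuous_subtype_val) _
end

section
/- Let p : E → B and p' : E' → B be continuous maps over the same base and let f : B → C be a continuous map such that f(B) ⊆ C is a normal space in the subspace topology. Let p ×_B p' : E ×_B E' → B denote the fibrewise product, where E ×_B E' = {(e, e') ∈ E × E' : p(e) = p'(e')} with the subspace topology and (p ×_B p')(e, e') = p(e). Then (1) max{secat_f[p], secat_f[p']} ≤ secat_f[p ×_B p'] ≤ secat_f[p] + secat_f[p']; and (2) if p' admits a global continuous section, then secat_f[p ×_B p'] = secat_f[p]. -/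
/-- The fibrewise product `E ×_B E' → B` of `p : E → B` and `p' : E' → B`. -/
noncomputable def fibrewiseProd {E E' B : Type*} [TopologicalSpace E] [TopologicalSpace E']
    [TopologicalSpace B] (p : C(E, B)) (p' : C(E', B)) :
    C({q : E × E' // p q.1 = p' q.2}, B) :=
  ⟨fun q => p (q : E × E').1,
    p.continuous.comp (continuous_fst.comp continuous_subtype_val)⟩

section aux
variable {E B C : Type*} [TopologicalSpace E] [TopologicalSpace B] [TopologicalSpace C]

/-- A witness for `secatf p f ≤ m`. -/
def SecatWit (p : C(E, B)) (f : C(B, C)) (m : ℕ) : Prop :=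
  ∃ U : Fin (m + 1) → Set C,
    (∀ i, IsOpen (U i)) ∧ Set.range f ⊆ (⋃ i, U i) ∧
    ∀ i, ∃ s : C((⇑f ⁻¹' U i : Set B), E), ∀ x, p (s x) = (x : B)

lemma secatf_eq_sInf (p : C(E, B)) (f : C(B, C)) :
    secatf p f = sInf {n : ℕ∞ | ∃ m : ℕ, n = m ∧ SecatWit p f m} := rfl

lemma secatf_le {p : C(E, B)} {f : C(B, C)} {m : ℕ} (h : SecatWit p f m) :
    secatf p f ≤ m := sInf_le ⟨m, rfl, h⟩

lemma exists_secatWit {p : C(E, B)} {f : C(B, C)} (h : secatf p f ≠ ⊤) :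
    ∃ m : ℕ, secatf p f = m ∧ SecatWit p f m := by
  set S := {n : ℕ∞ | ∃ m : ℕ, n = m ∧ SecatWit p f m} with hSdef
  have hS : S.Nonempty := by
    by_contra hc
    rw [Set.not_nonempty_iff_eq_empty] at hc
    exact h (by rw [secatf_eq_sInf, ← hSdef, hc, sInf_empty])
  obtain ⟨a, haS, hmin⟩ := wellFounded_lt.has_min S hS
  have hsecat : secatf p f = a := by
    rw [secatf_eq_sInf]
    exact le_antisymm (sInf_le haS) (le_sInf fun b hb => not_lt.mp (hmin b hb))
  obtain ⟨m, rfl, hw⟩ := haS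
  exact ⟨m, hsecat, hw⟩

lemma secatWit_map {E₂ : Type*} [TopologicalSpace E₂] {p : C(E, B)} {f : C(B, C)} {m : ℕ}
    (q : C(E₂, B))
    (H : ∀ U : Set C, (∃ s : C((⇑f ⁻¹' U : Set B), E), ∀ x, p (s x) = (x : B)) →
      ∃ t : C((⇑f ⁻¹' U : Set B), E₂), ∀ x, q (t x) = (x : B))
    (h : SecatWit p f m) : SecatWit q f m := by
  obtain ⟨U, hUo, hUc, hUs⟩ := h
  exact ⟨U, hUo, hUc, fun i => H (U i) (hUs i)⟩

end aux

/-- The pair `(i,j)` strictly dominates all other pairs on its diagonal. -/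
def GoodPair {n m : ℕ} (u : Fin (n + 1) → ℝ) (v : Fin (m + 1) → ℝ)
    (i : Fin (n + 1)) (j : Fin (m + 1)) : Prop :=
  0 < u i * v j ∧ ∀ a : Fin (n + 1), ∀ b : Fin (m + 1),
    (a : ℕ) + (b : ℕ) = (i : ℕ) + (j : ℕ) → (a, b) ≠ (i, j) → u a * v b < u i * v j

lemma exists_greatest_argmax {k : ℕ} (w : Fin (k + 1) → ℝ) :
    ∃ i, (∀ a, w a ≤ w i) ∧ ∀ a, i < a → w a < w i := by
  obtain ⟨i0, -, hmax⟩ := Finset.exists_max_image Finset.univ w ⟨0, Finset.mem_univ 0⟩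
  set S : Finset (Fin (k + 1)) := Finset.univ.filter (fun i => w i0 ≤ w i) with hSdef
  have hS : S.Nonempty := ⟨i0, by simp [hSdef]⟩
  have hmem : ∀ a, w a ≤ w (S.max' hS) := by
    have h1 : w i0 ≤ w (S.max' hS) := (Finset.mem_filter.mp (S.max'_mem hS)).2
    exact fun a => le_trans (hmax a (Finset.mem_univ a)) h1
  refine ⟨S.max' hS, hmem, fun a ha => ?_⟩
  by_contra hlt
  push_neg at hlt
  have haS : a ∈ S := Finset.mem_filter.mpr
    ⟨Finset.mem_univ a, le_trans (le_trans (hmax _ (Finset.mem_univ _)) (hmem i0)) hlt⟩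
  exact absurd (S.le_max' a haS) (not_le.mpr ha)

lemma goodPair_exists {n m : ℕ} {u : Fin (n + 1) → ℝ} {v : Fin (m + 1) → ℝ}
    (hu0 : ∀ i, 0 ≤ u i) (hu : ∃ i, 0 < u i) (hv0 : ∀ j, 0 ≤ v j) (hv : ∃ j, 0 < v j) :
    ∃ i j, GoodPair u v i j := by
  obtain ⟨i, hiall, hilt⟩ := exists_greatest_argmax u
  obtain ⟨j, hjall, hjlt⟩ := exists_greatest_argmax v
  obtain ⟨i1, hi1⟩ := hu
  obtain ⟨j1, hj1⟩ := hv
  have hui : 0 < u i := lt_of_lt_of_le hi1 (hiall i1)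
  have hvj : 0 < v j := lt_of_lt_of_le hj1 (hjall j1)
  refine ⟨i, j, mul_pos hui hvj, fun a b hsum hne => ?_⟩
  rcases lt_trichotomy (a : ℕ) (i : ℕ) with hlt | heq | hgt
  · have hb : (j : ℕ) < (b : ℕ) := by omega
    have hvb : v b < v j := hjlt b (by rwa [Fin.lt_def])
    calc u a * v b ≤ u i * v b := mul_le_mul_of_nonneg_right (hiall a) (hv0 b)
      _ < u i * v j := by exact mul_lt_mul_of_pos_left hvb hui
  · have ha : a = i := Fin.ext heq
    have hb : b = j := Fin.ext (by omega)
    exact absurd (by rw [ha, hb]) hne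
  · have hua : u a < u i := hilt a (by rwa [Fin.lt_def])
    calc u a * v b ≤ u a * v j := mul_le_mul_of_nonneg_left (hjall b) (hu0 a)
      _ < u i * v j := by exact mul_lt_mul_of_pos_right hua hvj

lemma goodPair_unique {n m : ℕ} {u : Fin (n + 1) → ℝ} {v : Fin (m + 1) → ℝ}
    {i i' : Fin (n + 1)} {j j' : Fin (m + 1)}
    (h1 : GoodPair u v i j) (h2 : GoodPair u v i' j')
    (hsum : (i : ℕ) + (j : ℕ) = (i' : ℕ) + (j' : ℕ)) : i = i' ∧ j = j' := by
  by_contra hc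
  have hne : (i', j') ≠ (i, j) := by
    intro h; exact hc ⟨(Prod.mk.injEq .. ▸ h).1.symm, (Prod.mk.injEq .. ▸ h).2.symm⟩
  have hne' : (i, j) ≠ (i', j') := fun h => hne h.symm
  exact absurd (lt_trans (h1.2 i' j' hsum.symm hne) (h2.2 i j hsum hne'))
    (lt_irrefl _)

lemma goodPair_pos {n m : ℕ} {u : Fin (n + 1) → ℝ} {v : Fin (m + 1) → ℝ}
    {i : Fin (n + 1)} {j : Fin (m + 1)} (hu0 : ∀ i, 0 ≤ u i) (hv0 : ∀ j, 0 ≤ v j)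
    (h : GoodPair u v i j) : 0 < u i ∧ 0 < v j := by
  rcases (hu0 i).lt_or_eq with h1 | h1
  · rcases (hv0 j).lt_or_eq with h2 | h2
    · exact ⟨h1, h2⟩
    · exact absurd h.1 (by rw [← h2, mul_zero]; exact lt_irrefl 0)
  · exact absurd h.1 (by rw [← h1, zero_mul]; exact lt_irrefl 0)

lemma isOpen_goodPair {X : Type*} [TopologicalSpace X] {n m : ℕ}
    (φ : Fin (n + 1) → C(X, ℝ)) (ψ : Fin (m + 1) → C(X, ℝ)) (i : Fin (n + 1)) (j : Fin (m + 1)) :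
    IsOpen {x : X | GoodPair (fun a => φ a x) (fun b => ψ b x) i j} := by
  have hset : {x : X | GoodPair (fun a => φ a x) (fun b => ψ b x) i j}
      = {x : X | 0 < φ i x * ψ j x} ∩
        ⋂ (a : Fin (n + 1)) (b : Fin (m + 1)),
          {x : X | (a : ℕ) + (b : ℕ) = (i : ℕ) + (j : ℕ) → (a, b) ≠ (i, j) →
            φ a x * ψ b x < φ i x * ψ j x} := by
    ext x
    simp only [GoodPair, Set.mem_setOf_eq, Set.mem_inter_iff, Set.mem_iInter]
  rw [hset]
  refine IsOpen.inter (isOpen_lt continuous_const (((φ i).continuous).mul ((ψ j).continuous)))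
    (isOpen_iInter_of_finite fun a => isOpen_iInter_of_finite fun b => ?_)
  by_cases h1 : (a : ℕ) + (b : ℕ) = (i : ℕ) + (j : ℕ)
  · by_cases h2 : (a, b) = (i, j)
    · have : {x : X | (a : ℕ) + (b : ℕ) = (i : ℕ) + (j : ℕ) → (a, b) ≠ (i, j) →
          φ a x * ψ b x < φ i x * ψ j x} = Set.univ :=
        Set.eq_univ_iff_forall.mpr (fun x _ hne => absurd h2 hne)
      rw [this]; exact isOpen_univ
    · have : {x : X | (a : ℕ) + (b : ℕ) = (i : ℕ) + (j : ℕ) → (a, b) ≠ (i, j) →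
          φ a x * ψ b x < φ i x * ψ j x} = {x : X | φ a x * ψ b x < φ i x * ψ j x} := by
        ext x; simp [h1, h2]
      rw [this]
      exact isOpen_lt (((φ a).continuous).mul ((ψ b).continuous))
        (((φ i).continuous).mul ((ψ j).continuous))
  · have : {x : X | (a : ℕ) + (b : ℕ) = (i : ℕ) + (j : ℕ) → (a, b) ≠ (i, j) →
        φ a x * ψ b x < φ i x * ψ j x} = Set.univ :=
      Set.eq_univ_iff_forall.mpr (fun x h => absurd h h1)
    rw [this]; exact isOpen_univ

lemma glue_sections {B E₂ : Type*} [TopologicalSpace B] [TopologicalSpace E₂]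
    (q : C(E₂, B)) {ι : Type*} (P : ι → Set B) (hPo : ∀ i, IsOpen (P i))
    (hPd : ∀ i j, i ≠ j → ∀ b, b ∈ P i → b ∈ P j → False)
    (σ : ∀ i, C((P i : Set B), E₂)) (hσ : ∀ i x, q (σ i x) = (x : B)) :
    ∃ s : C((⋃ i, P i : Set B), E₂), ∀ x, q (s x) = (x : B) := by
  classical
  by_cases hE : Nonempty E₂
  · haveI := hE
    set g : B → E₂ := fun b =>
      if h : ∃ i, b ∈ P i then σ h.choose ⟨b, h.choose_spec⟩ else Classical.arbitrary E₂
      with hgdef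
    have hgP : ∀ i, ContinuousOn g (P i) := by
      intro i
      rw [continuousOn_iff_continuous_restrict]
      have hres : (P i).restrict g = ⇑(σ i) := by
        funext x
        have hx : ∃ j, (x : B) ∈ P j := ⟨i, x.2⟩
        have hEq : (P i).restrict g x = σ hx.choose ⟨(x : B), hx.choose_spec⟩ := by
          simp only [Set.restrict, Set.domRestrict_apply, hgdef, dif_pos hx]
        have key : ∀ (j : ι) (hj : (x : B) ∈ P j), σ j ⟨(x : B), hj⟩ = σ i x := by
          intro j hj
          rcases eq_or_ne j i with rfl | hne
          · congr
          · exact absurd (hPd _ _ hne (x : B) hj x.2) (fun h => h)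
        rw [hEq, key hx.choose hx.choose_spec]
      show Continuous ((P i).restrict g)
      rw [hres]
      exact (σ i).continuous
    have hgU : ContinuousOn g (⋃ i, P i) := by
      intro b hb
      obtain ⟨i, hi⟩ := Set.mem_iUnion.mp hb
      exact ((hgP i).continuousAt ((hPo i).mem_nhds hi)).continuousWithinAt
    refine ⟨⟨(⋃ i, P i).restrict g, hgU.restrict⟩, ?_⟩
    intro x
    have hx : ∃ i, (x : B) ∈ P i := Set.mem_iUnion.mp x.2
    have hgx : (⋃ i, P i).restrict g x = σ hx.choose ⟨(x : B), hx.choose_spec⟩ := by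
      simp only [Set.restrict, Set.domRestrict_apply, hgdef, dif_pos hx]
    show q ((⋃ i, P i).restrict g x) = (x : B)
    rw [hgx, hσ]
  · have hempty : IsEmpty ((⋃ i, P i : Set B)) := by
      constructor
      intro x
      obtain ⟨i, hi⟩ := Set.mem_iUnion.mp x.2
      exact hE ⟨σ i ⟨(x : B), hi⟩⟩
    exact ⟨⟨fun x => isEmptyElim x, continuous_iff_continuousAt.mpr fun x => isEmptyElim x⟩,
      fun x => isEmptyElim x⟩

lemma exists_bumps {X : Type*} [TopologicalSpace X] [NormalSpace X] {k : ℕ}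
    (W : Fin k → Set X) (hWo : ∀ i, IsOpen (W i)) (hWc : ∀ x, ∃ i, x ∈ W i) :
    ∃ φ : Fin k → C(X, ℝ), (∀ i x, 0 ≤ φ i x) ∧ (∀ i x, φ i x ≠ 0 → x ∈ W i) ∧
      ∀ x, ∃ i, 0 < φ i x := by
  obtain ⟨v, hv_cov, hv_o, hv_cl⟩ := exists_subset_iUnion_closure_subset (s := Set.univ)
    isClosed_univ hWo (fun x _ => Set.toFinite _)
    (fun x _ => Set.mem_iUnion.mpr (hWc x))
  have hurysohn : ∀ i, ∃ f : C(X, ℝ), Set.EqOn f 0 ((W i)ᶜ) ∧ Set.EqOn f 1 (closure (v i)) ∧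
      ∀ x, f x ∈ Set.Icc (0 : ℝ) 1 := fun i =>
    exists_continuous_zero_one_of_isClosed (isClosed_compl_iff.mpr (hWo i)) isClosed_closure
      (Set.disjoint_left.mpr fun x hx hx' => hx (hv_cl i hx'))
  choose φ hφ0 hφ1 hφIcc using hurysohn
  refine ⟨φ, fun i x => (hφIcc i x).1, ?_, ?_⟩
  · intro i x hne
    by_contra hx
    exact hne (hφ0 i hx)
  · intro x
    obtain ⟨i, hi⟩ := Set.mem_iUnion.mp (hv_cov (Set.mem_univ x))
    exact ⟨i, by rw [hφ1 i (subset_closure hi)]; norm_num⟩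

lemma secatWit_prod {E E' B C : Type*} [TopologicalSpace E] [TopologicalSpace E']
    [TopologicalSpace B] [TopologicalSpace C]
    (p : C(E, B)) (p' : C(E', B)) (f : C(B, C))
    [NormalSpace (Set.range f : Set C)] {n m : ℕ}
    (hp : SecatWit p f n) (hp' : SecatWit p' f m) :
    SecatWit (fibrewiseProd p p') f (n + m) := by
  obtain ⟨U, hUo, hUc, hUs⟩ := hp
  obtain ⟨V, hVo, hVc, hVs⟩ := hp'
  set X := (Set.range f : Set C) with hXdef
  -- bump functions on X
  obtain ⟨φ, hφ0, hφs, hφc⟩ := exists_bumps (X := X)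
    (fun i => Subtype.val ⁻¹' U i) (fun i => (hUo i).preimage continuous_subtype_val)
    (fun x => by
      obtain ⟨i, hi⟩ := Set.mem_iUnion.mp (hUc x.2)
      exact ⟨i, hi⟩)
  obtain ⟨ψ, hψ0, hψs, hψc⟩ := exists_bumps (X := X)
    (fun j => Subtype.val ⁻¹' V j) (fun j => (hVo j).preimage continuous_subtype_val)
    (fun x => by
      obtain ⟨j, hj⟩ := Set.mem_iUnion.mp (hVc x.2)
      exact ⟨j, hj⟩)
  -- the pieces in X
  set pieceX : Fin (n + 1) → Fin (m + 1) → Set X :=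
    fun i j => {x : X | GoodPair (fun a => φ a x) (fun b => ψ b x) i j} with hpieceXdef
  set WX : Fin (n + m + 1) → Set X := fun k =>
    ⋃ ij : {ij : Fin (n + 1) × Fin (m + 1) // (ij.1 : ℕ) + (ij.2 : ℕ) = (k : ℕ)},
      pieceX ij.1.1 ij.1.2 with hWXdef
  have hWXo : ∀ k, IsOpen (WX k) :=
    fun k => isOpen_iUnion (fun ij => isOpen_goodPair φ ψ ij.1.1 ij.1.2)
  -- choose open sets in C inducing the WX
  have hind : ∀ k, ∃ O : Set C, IsOpen O ∧ Subtype.val ⁻¹' O = WX k :=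
    fun k => isOpen_induced_iff.mp (hWXo k)
  choose O hOo hOeq using hind
  -- the continuous map B → X
  set fX : B → X := fun b => ⟨f b, ⟨b, rfl⟩⟩ with hfXdef
  have hfXc : Continuous fX := (map_continuous f).subtype_mk _
  refine ⟨O, hOo, ?_, ?_⟩
  · -- covering
    rintro c ⟨b, rfl⟩
    set x : X := ⟨f b, ⟨b, rfl⟩⟩ with hxdef
    obtain ⟨i, j, hgood⟩ := goodPair_exists (fun a => hφ0 a x)
      (hφc x) (fun bb => hψ0 bb x) (hψc x)
    have hk : (i : ℕ) + (j : ℕ) < n + m + 1 := by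
      have := i.isLt; have := j.isLt; omega
    refine Set.mem_iUnion.mpr ⟨⟨(i : ℕ) + (j : ℕ), hk⟩, ?_⟩
    have hx : x ∈ WX ⟨(i : ℕ) + (j : ℕ), hk⟩ :=
      Set.mem_iUnion.mpr ⟨⟨(i, j), rfl⟩, hgood⟩
    have := (hOeq ⟨(i : ℕ) + (j : ℕ), hk⟩) ▸ hx
    exact this
  · -- sections
    intro k
    -- the pieces in B
    set ι := {ij : Fin (n + 1) × Fin (m + 1) // (ij.1 : ℕ) + (ij.2 : ℕ) = (k : ℕ)} with hιdef
    set P : ι → Set B := fun ij => fX ⁻¹' pieceX ij.1.1 ij.1.2 with hPdef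
    have hPo : ∀ ij, IsOpen (P ij) :=
      fun ij => (isOpen_goodPair φ ψ ij.1.1 ij.1.2).preimage hfXc
    have hPre : ⇑f ⁻¹' O k = ⋃ ij : ι, P ij := by
      have h1 : ⇑f ⁻¹' O k = fX ⁻¹' (Subtype.val ⁻¹' O k) := rfl
      rw [h1, hOeq k, hWXdef]
      rw [Set.preimage_iUnion]
    have hPd : ∀ ij ij' : ι, ij ≠ ij' → ∀ b, b ∈ P ij → b ∈ P ij' → False := by
      intro ij ij' hne b hb hb'
      have hb1 : GoodPair (fun a => φ a (fX b)) (fun bb => ψ bb (fX b)) ij.1.1 ij.1.2 := hb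
      have hb1' : GoodPair (fun a => φ a (fX b)) (fun bb => ψ bb (fX b)) ij'.1.1 ij'.1.2 := hb'
      have h12 := goodPair_unique hb1 hb1' (ij.2.trans ij'.2.symm)
      exact hne (Subtype.ext (Prod.ext h12.1 h12.2))
    -- a section over each piece
    have hσ : ∀ ij : ι, ∃ σ : C((P ij : Set B), {q : E × E' // p q.1 = p' q.2}),
        ∀ x, fibrewiseProd p p' (σ x) = (x : B) := by
      intro ij
      obtain ⟨s, hs⟩ := hUs ij.1.1
      obtain ⟨t, ht⟩ := hVs ij.1.2
      have hsubU : P ij ⊆ ⇑f ⁻¹' U ij.1.1 := by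
        intro b hb
        have hpos := goodPair_pos (fun a => hφ0 a (fX b)) (fun bb => hψ0 bb (fX b)) hb
        exact hφs ij.1.1 (fX b) (ne_of_gt hpos.1)
      have hsubV : P ij ⊆ ⇑f ⁻¹' V ij.1.2 := by
        intro b hb
        have hpos := goodPair_pos (fun a => hφ0 a (fX b)) (fun bb => hψ0 bb (fX b)) hb
        exact hψs ij.1.2 (fX b) (ne_of_gt hpos.2)
      refine ⟨⟨fun x => ⟨(s ⟨(x : B), hsubU x.2⟩, t ⟨(x : B), hsubV x.2⟩), by
        rw [hs, ht]⟩, ?_⟩, ?_⟩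
      · refine Continuous.subtype_mk (Continuous.prodMk ?_ ?_) _
        · exact s.continuous.comp (continuous_subtype_val.subtype_mk _)
        · exact t.continuous.comp (continuous_subtype_val.subtype_mk _)
      · intro x
        show p (s ⟨(x : B), hsubU x.2⟩) = (x : B)
        exact hs _
    choose σ hσ' using hσ
    rw [hPre]
    exact glue_sections (fibrewiseProd p p') P hPo hPd σ hσ'


/-- Product inequality, II: For `p : E → B`, `p' : E' → B` over the same base
and `f : B → C` with `f(B)` normal in the subspace topology: (1)
`max{secat_f[p], secat_f[p']} ≤ secat_f[p ×_B p'] ≤ secat_f[p] + secat_f[p']`; and (2) if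
`p'` admits a global continuous section then `secat_f[p ×_B p'] = secat_f[p]`. -/
theorem secatf_fibrewiseProd {E E' B C : Type*} [TopologicalSpace E] [TopologicalSpace E']
    [TopologicalSpace B] [TopologicalSpace C]
    (p : C(E, B)) (p' : C(E', B)) (f : C(B, C))
    [NormalSpace (Set.range f : Set C)] :
    (max (secatf p f) (secatf p' f) ≤ secatf (fibrewiseProd p p') f ∧
      secatf (fibrewiseProd p p') f ≤ secatf p f + secatf p' f) ∧
    ((∃ s : C(B, E'), ∀ b, p' (s b) = b) → secatf (fibrewiseProd p p') f = secatf p f) := by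
  have hle1 : secatf p f ≤ secatf (fibrewiseProd p p') f := by
    rcases eq_or_ne (secatf (fibrewiseProd p p') f) ⊤ with h | h
    · rw [h]; exact le_top
    · obtain ⟨k, hk, hw⟩ := exists_secatWit h
      rw [hk]
      refine secatf_le (secatWit_map p ?_ hw)
      rintro U ⟨s, hs⟩
      refine ⟨⟨fun x => ((s x : {q : E × E' // p q.1 = p' q.2}) : E × E').1,
        continuous_fst.comp (continuous_subtype_val.comp s.continuous)⟩, ?_⟩
      intro x
      exact hs x
  have hle2 : secatf p' f ≤ secatf (fibrewiseProd p p') f := by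
    rcases eq_or_ne (secatf (fibrewiseProd p p') f) ⊤ with h | h
    · rw [h]; exact le_top
    · obtain ⟨k, hk, hw⟩ := exists_secatWit h
      rw [hk]
      refine secatf_le (secatWit_map p' ?_ hw)
      rintro U ⟨s, hs⟩
      refine ⟨⟨fun x => ((s x : {q : E × E' // p q.1 = p' q.2}) : E × E').2,
        continuous_snd.comp (continuous_subtype_val.comp s.continuous)⟩, ?_⟩
      intro x
      calc p' ((s x : {q : E × E' // p q.1 = p' q.2}) : E × E').2
          = p ((s x : {q : E × E' // p q.1 = p' q.2}) : E × E').1 := (s x).2.symm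
        _ = (x : B) := hs x
  refine ⟨⟨max_le hle1 hle2, ?_⟩, ?_⟩
  · rcases eq_or_ne (secatf p f) ⊤ with h | h
    · rw [h, top_add]; exact le_top
    rcases eq_or_ne (secatf p' f) ⊤ with h' | h'
    · rw [h', add_top]; exact le_top
    obtain ⟨a, ha, hwa⟩ := exists_secatWit h
    obtain ⟨b, hb, hwb⟩ := exists_secatWit h'
    rw [ha, hb, ← Nat.cast_add]
    exact secatf_le (secatWit_prod p p' f hwa hwb)
  · rintro ⟨s', hs'⟩
    refine le_antisymm ?_ hle1
    rcases eq_or_ne (secatf p f) ⊤ with h | h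
    · rw [h]; exact le_top
    · obtain ⟨k, hk, hw⟩ := exists_secatWit h
      rw [hk]
      refine secatf_le (secatWit_map (fibrewiseProd p p') ?_ hw)
      rintro U ⟨s, hs⟩
      refine ⟨⟨fun x => ⟨(s x, s' (x : B)), by rw [hs, hs']⟩, ?_⟩, ?_⟩
      · exact Continuous.subtype_mk
          (s.continuous.prodMk (s'.continuous.comp continuous_subtype_val)) _
      · intro x
        exact hs x
end

section
/- Let G be a topological group acting continuously on a path-connected topological space X, let r ≥ 2, and let K be a path-connected, locally compact, metrizable space with r pairwise distinct marked points k_1, …, k_r ∈ K. Let ρ_r^K : C(K, X) → X^r be the evaluation map ρ_r^K(α) = (α(k_1), …, α(k_r)) on the mapping space with the compact-open topology, where G acts pointwise on C(K, X) and diagonally on X^r. Then TC_{r,G}(X) equals the least integer n ≥ 0 such that X^r admits a cover by n+1 G-invariant open sets, each admitting a continuous G-equivariant section of ρ_r^K (with the convention that this number is ∞ if no such cover exists). -/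
open scoped unitInterval

/-- The sequential equivariant topological complexity defined with respect to a space `K`
with marked points `k 0, …, k (r-1)`: the least `n` such that `(Fin r → X)` (with the
diagonal `G`-action) admits a cover by `n+1` `G`-invariant open sets, each admitting a
continuous `G`-equivariant section of the evaluation map `C(K, X) → (Fin r → X)`,
`α ↦ (α (k 0), …, α (k (r-1)))` (equivariance and the `G`-action on `C(K, X)` being
pointwise). -/
noncomputable def eqTCVia (G X : Type*) [Group G] [TopologicalSpace X] [MulAction G X]
    {r : ℕ} (K : Type*) [TopologicalSpace K] (k : Fin r → K) : ℕ∞ :=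
  sInf {n : ℕ∞ | ∃ m : ℕ, n = m ∧ ∃ U : Fin (m + 1) → Set (Fin r → X),
    (∀ i, IsOpen (U i)) ∧ (⋃ i, U i) = Set.univ ∧
    (∀ i (g : G), ∀ x ∈ U i, g • x ∈ U i) ∧
    ∀ i, ∃ s : C((U i : Set (Fin r → X)), C(K, X)),
      (∀ x : U i, ∀ j, s x (k j) = (x : Fin r → X) j) ∧
      ∀ (x y : U i) (g : G), (y : Fin r → X) = g • (x : Fin r → X) →
        ∀ κ : K, s y κ = g • s x κ}

/-- The sequential equivariant topological complexity `TC_{r,G}(X)` of Bayeh–Sarkar and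
Colman–Grant, relative to the time points `0 = t 0 < t 1 < ⋯ < t (r-1) = 1` in `[0,1]`. -/
noncomputable def eqTC (G X : Type*) [Group G] [TopologicalSpace X] [MulAction G X]
    {r : ℕ} (t : Fin r → unitInterval) : ℕ∞ :=
  eqTCVia G X unitInterval t

/-- If there is a continuous map `f : A → B` carrying the marked points of `A` to the
marked points of `B`, then the `A`-version of the invariant is at most the `B`-version:
precomposition with `f` turns sections of the `B`-evaluation into sections of the
`A`-evaluation. -/
private lemma eqTCVia_le_of_map (G X : Type*) [Group G] [TopologicalSpace X] [MulAction G X]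
    {r : ℕ} {A B : Type*} [TopologicalSpace A] [TopologicalSpace B]
    (a : Fin r → A) (b : Fin r → B) (f : C(A, B)) (hf : ∀ j, f (a j) = b j) :
    eqTCVia G X A a ≤ eqTCVia G X B b := by
  apply sInf_le_sInf
  rintro n ⟨m, rfl, U, hop, hcov, hinv, hsec⟩
  refine ⟨m, rfl, U, hop, hcov, hinv, fun i => ?_⟩
  obtain ⟨s, hs1, hs2⟩ := hsec i
  refine ⟨⟨fun x => (s x).comp f, (ContinuousMap.continuous_precomp f).comp s.continuous⟩,
    ?_, ?_⟩
  · intro x j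
    simp only [ContinuousMap.coe_mk, ContinuousMap.comp_apply, hf j]
    exact hs1 x j
  · intro x y g hxy κ
    exact hs2 x y g hxy (f κ)

/-- In a path-connected space one can find a continuous map from `ℝ` passing through any
finite list of points at any prescribed strictly increasing list of times. -/
private lemma exists_contMap_real {K : Type*} [TopologicalSpace K] [PathConnectedSpace K] :
    ∀ (n : ℕ) (p : Fin (n + 1) → K) (u : Fin (n + 1) → ℝ), StrictMono u →
      ∃ γ : C(ℝ, K), ∀ j, γ (u j) = p j := by
  intro n
  induction n with
  | zero =>
    intro p u _
    exact ⟨ContinuousMap.const ℝ (p 0), fun j => by rw [Fin.eq_zero j]; rfl⟩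
  | succ n ih =>
    intro p u hu
    obtain ⟨γ, hγ⟩ := ih (p ∘ Fin.castSucc) (u ∘ Fin.castSucc)
      (hu.comp Fin.strictMono_castSucc)
    set a := u (Fin.castSucc (Fin.last n)) with ha
    set b := u (Fin.last (n + 1)) with hb
    have hab : a < b := hu (Fin.castSucc_lt_last _)
    have hba : b - a ≠ 0 := sub_ne_zero.2 hab.ne'
    have hsrc : γ a = p (Fin.castSucc (Fin.last n)) := hγ (Fin.last n)
    let π : Path (p (Fin.castSucc (Fin.last n))) (p (Fin.last (n + 1))) :=
      PathConnectedSpace.somePath _ _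
    classical
    refine ⟨⟨fun x => if x ≤ a then γ x
        else π (Set.projIcc 0 1 zero_le_one ((x - a) / (b - a))), ?_⟩, ?_⟩
    · refine Continuous.if_le γ.continuous ?_ continuous_id continuous_const ?_
      · exact π.continuous.comp (continuous_projIcc.comp (by fun_prop))
      · intro x hx
        subst hx
        rw [hsrc, sub_self, zero_div, Set.projIcc_left]
        exact π.source.symm
    · intro j
      refine Fin.lastCases ?_ (fun i => ?_) j
      · have h1 : ¬ u (Fin.last (n + 1)) ≤ a := not_le.2 hab
        simp only [ContinuousMap.coe_mk, if_neg h1, ← hb, div_self hba, Set.projIcc_right]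
        rw [if_neg (not_le.2 hab)]
        exact π.target
      · have h2 : u (Fin.castSucc i) ≤ a :=
          hu.monotone (Fin.castSucc_le_castSucc_iff.2 (Fin.le_last i))
        simp only [ContinuousMap.coe_mk, if_pos h2]
        exact hγ i

/-- For a topological group `G` acting continuously on a path-connected space
`X`, `r ≥ 2`, and a path-connected locally compact metrizable space `K` with `r` pairwise
distinct marked points `k 0, …, k (r-1)`, the invariant `TC_{r,G}(X)` equals its analogue
defined using the evaluation map `C(K, X) → X^r` at the points `k j`. -/
theorem eqTC_eq_eqTCVia {G X K : Type*} [Group G] [TopologicalSpace G] [IsTopologicalGroup G]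
    [TopologicalSpace X] [PathConnectedSpace X] [MulAction G X] [ContinuousSMul G X]
    [TopologicalSpace K] [PathConnectedSpace K] [LocallyCompactSpace K]
    [TopologicalSpace.MetrizableSpace K]
    {r : ℕ} (hr : 2 ≤ r) (t : Fin r → unitInterval) (htm : StrictMono t)
    (ht0 : t ⟨0, by omega⟩ = 0) (ht1 : t ⟨r - 1, by omega⟩ = 1)
    (k : Fin r → K) (hk : Function.Injective k) :
    eqTC G X t = eqTCVia G X K k := by
  classical
  obtain ⟨n, rfl⟩ : ∃ n, r = n + 1 := ⟨r - 1, by omega⟩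
  letI : MetricSpace K := TopologicalSpace.metrizableSpaceMetric K
  -- A continuous map `φ : K → [0,1]` with `φ (k j) = t j`, via Tietze extension.
  have hS : IsClosed (Set.range k) := (Set.finite_range k).isClosed
  haveI : Finite (Set.range k) := (Set.finite_range k).to_subtype
  let f0 : C(Set.range k, ℝ) :=
    ⟨fun s => (t (Function.invFun k s.1) : ℝ), continuous_of_discreteTopology⟩
  obtain ⟨g, hg⟩ := f0.exists_restrict_eq hS
  let φ : C(K, unitInterval) :=
    ⟨fun x => Set.projIcc 0 1 zero_le_one (g x), continuous_projIcc.comp g.continuous⟩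
  have hφ : ∀ j, φ (k j) = t j := by
    intro j
    have h1 : g (k j) = (t j : ℝ) := by
      have h2 := congrFun (congrArg DFunLike.coe hg) ⟨k j, Set.mem_range_self j⟩
      simp only [ContinuousMap.coe_restrict, Function.comp_apply, f0,
        ContinuousMap.coe_mk] at h2
      change g (k j) = _ at h2
      rw [h2, Function.leftInverse_invFun hk j]
    show Set.projIcc 0 1 zero_le_one (g (k j)) = t j
    rw [h1, Set.projIcc_of_mem zero_le_one (t j).2]
  -- A continuous map `γ : [0,1] → K` with `γ (t j) = k j`, via path-connectedness.
  obtain ⟨γ, hγ⟩ := exists_contMap_real n k (fun j => (t j : ℝ))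
    (fun i j h => Subtype.coe_lt_coe.2 (htm h))
  let γI : C(unitInterval, K) := γ.comp ⟨Subtype.val, continuous_subtype_val⟩
  have hγI : ∀ j, γI (t j) = k j := fun j => hγ j
  exact le_antisymm (eqTCVia_le_of_map G X t k γI hγI) (eqTCVia_le_of_map G X k t φ hφ)
end
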